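/- Let A_1, A_2 ∈ ℝ^{n×n}, B_1, B_2 ∈ ℝ^{n×p}, and let D ⊆ ℝ×ℝ. Then the pairs (A_1,B_1) and (A_2,B_2) are feedback rectifiable over D if and only if the ℝ-linear span of the union over (λ,μ) ∈ D of the subspaces V^ℝ_{A_1,B_1}(λ) ∩ V^ℝ_{A_2,B_2}(μ) equals ℝ^n. -/

import Mathlib

open Matrix

noncomputable section

/-- Entrywise coercion of a real matrix to a complex matrix. -/
def mapC {n m : ℕ} (A : Matrix (Fin n) (Fin m) ℝ) : Matrix (Fin n) (Fin m) ℂ :=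
  A.map (fun x => (x : ℂ))

/-- `V^ℝ_{A,B}(λ) = {v ∈ ℝ^n : (λI − A)v ∈ range B}`. -/
def VspR {n p : ℕ} (A : Matrix (Fin n) (Fin n) ℝ) (B : Matrix (Fin n) (Fin p) ℝ) (l : ℝ) :
    Submodule ℝ (Fin n → ℝ) :=
  Submodule.comap (l • (1 : Matrix (Fin n) (Fin n) ℝ) - A).mulVecLin
    (LinearMap.range B.mulVecLin)

/-- The pairs `(A₁,B₁)` and `(A₂,B₂)` are feedback rectifiable over `D ⊆ ℂ × ℂ`. -/
def FeedbackRectifiable {n p : ℕ} (A₁ A₂ : Matrix (Fin n) (Fin n) ℝ)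
    (B₁ B₂ : Matrix (Fin n) (Fin p) ℝ) (D : Set (ℂ × ℂ)) : Prop :=
  ∃ (F₁ F₂ : Matrix (Fin p) (Fin n) ℝ) (lm : Fin n → ℂ × ℂ) (v : Fin n → Fin n → ℂ),
    (∀ i, lm i ∈ D) ∧ LinearIndependent ℂ v ∧
    (∀ i, (mapC (A₁ + B₁ * F₁)).mulVec (v i) = (lm i).1 • v i) ∧
    (∀ i, (mapC (A₂ + B₂ * F₂)).mulVec (v i) = (lm i).2 • v i)

namespace FRaux

variable {n p : ℕ}

/-- Entrywise coercion of a real vector to a complex vector. -/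
def cpx (w : Fin n → ℝ) : Fin n → ℂ := fun j => (w j : ℂ)

lemma cpx_add (a b : Fin n → ℝ) : cpx (a + b) = cpx a + cpx b := by
  funext j; simp [cpx]

lemma cpx_smul (c : ℝ) (a : Fin n → ℝ) : cpx (c • a) = (c : ℂ) • cpx a := by
  funext j; simp [cpx]

lemma cpx_zero : cpx (0 : Fin n → ℝ) = 0 := by
  funext j; simp [cpx]

lemma mapC_mulVec_cpx (M : Matrix (Fin n) (Fin n) ℝ) (w : Fin n → ℝ) :
    (mapC M).mulVec (cpx w) = cpx (M.mulVec w) := by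
  funext k
  simp only [mapC, Matrix.mulVec, dotProduct, cpx, Matrix.map_apply]
  push_cast
  rfl

/-- If the complex span of the coercions of a real set is everything,
then the real span of the set is everything. -/
lemma spanR_top {S : Set (Fin n → ℝ)} (h : Submodule.span ℂ (cpx '' S) = ⊤) :
    Submodule.span ℝ S = ⊤ := by
  set M := Submodule.span ℝ S with hM
  let N : Submodule ℂ (Fin n → ℂ) :=
    { carrier := {z | (fun j => (z j).re) ∈ M ∧ (fun j => (z j).im) ∈ M}
      add_mem' := by
        rintro a b ⟨ha1, ha2⟩ ⟨hb1, hb2⟩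
        constructor
        · have : (fun j => ((a + b) j).re) =
            (fun j => (a j).re) + (fun j => (b j).re) := by funext j; simp
          rw [this]; exact add_mem ha1 hb1
        · have : (fun j => ((a + b) j).im) =
            (fun j => (a j).im) + (fun j => (b j).im) := by funext j; simp
          rw [this]; exact add_mem ha2 hb2
      zero_mem' := by
        constructor <;>
        · show (fun j => _) ∈ M
          have h0 : ∀ f : Fin n → ℝ, (∀ j, f j = 0) → f ∈ M := by
            intro f hf
            have : f = 0 := funext hf
            rw [this]; exact M.zero_mem
          exact h0 _ (fun j => by simp)
      smul_mem' := by
        rintro c z ⟨h1, h2⟩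
        constructor
        · have : (fun j => ((c • z) j).re) =
            c.re • (fun j => (z j).re) - c.im • (fun j => (z j).im) := by
            funext j; simp [Complex.mul_re]
          rw [this]; exact sub_mem (M.smul_mem _ h1) (M.smul_mem _ h2)
        · have : (fun j => ((c • z) j).im) =
            c.re • (fun j => (z j).im) + c.im • (fun j => (z j).re) := by
            funext j; simp [Complex.mul_im]
          rw [this]; exact add_mem (M.smul_mem _ h2) (M.smul_mem _ h1) }
  have hsub : Submodule.span ℂ (cpx '' S) ≤ N := by
    refine Submodule.span_le.2 ?_
    rintro _ ⟨x, hx, rfl⟩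
    refine ⟨?_, ?_⟩
    · have hre : (fun j => ((cpx x) j).re) = x := by funext j; simp [cpx]
      rw [hre]; exact Submodule.subset_span hx
    · have him : (fun j => ((cpx x) j).im) = (0 : Fin n → ℝ) := by funext j; simp [cpx]
      rw [him]; exact M.zero_mem
  rw [eq_top_iff]
  rintro x -
  have hx : cpx x ∈ N := hsub (h ▸ Submodule.mem_top)
  have hre : (fun j => ((cpx x) j).re) = x := by funext j; simp [cpx]
  have := hx.1
  rwa [hre] at this

/-- If the real span of a real set is everything, the complex span of its coercion is too. -/
lemma spanC_top {S : Set (Fin n → ℝ)} (h : Submodule.span ℝ S = ⊤) :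
    Submodule.span ℂ (cpx '' S) = ⊤ := by
  have key : ∀ x ∈ Submodule.span ℝ S, cpx x ∈ Submodule.span ℂ (cpx '' S) := by
    intro x hx
    induction hx using Submodule.span_induction with
    | mem x hx => exact Submodule.subset_span ⟨x, hx, rfl⟩
    | zero => rw [cpx_zero]; exact Submodule.zero_mem _
    | add a b _ _ ha hb => rw [cpx_add]; exact add_mem ha hb
    | smul c a _ ha => rw [cpx_smul]; exact Submodule.smul_mem _ _ ha
  rw [eq_top_iff]
  rintro z -
  have hre := key (fun j => (z j).re) (h ▸ Submodule.mem_top)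
  have him := key (fun j => (z j).im) (h ▸ Submodule.mem_top)
  have hz : z = cpx (fun j => (z j).re) + Complex.I • cpx (fun j => (z j).im) := by
    funext j
    simp only [cpx, Pi.add_apply, Pi.smul_apply, smul_eq_mul]
    rw [mul_comm]
    exact (Complex.re_add_im _).symm
  rw [hz]
  exact add_mem hre (Submodule.smul_mem _ _ him)

lemma mem_VspR_iff {A : Matrix (Fin n) (Fin n) ℝ} {B : Matrix (Fin n) (Fin p) ℝ} {l : ℝ}
    {w : Fin n → ℝ} :
    w ∈ VspR A B l ↔ ∃ u, B.mulVec u = (l • (1 : Matrix (Fin n) (Fin n) ℝ) - A).mulVec w := by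
  simp [VspR, Submodule.mem_comap, LinearMap.mem_range, Matrix.mulVecLin_apply,
    Matrix.sub_mulVec, Matrix.smul_mulVec, Matrix.one_mulVec]

lemma smul_one_sub_mulVec (A : Matrix (Fin n) (Fin n) ℝ) (l : ℝ) (w : Fin n → ℝ) :
    (l • (1 : Matrix (Fin n) (Fin n) ℝ) - A).mulVec w = l • w - A.mulVec w := by
  rw [Matrix.sub_mulVec, Matrix.smul_mulVec, Matrix.one_mulVec]

lemma eig_mem {A : Matrix (Fin n) (Fin n) ℝ} {B : Matrix (Fin n) (Fin p) ℝ}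
    {F : Matrix (Fin p) (Fin n) ℝ} {l : ℝ} {w : Fin n → ℝ}
    (h : (A + B * F).mulVec w = l • w) : w ∈ VspR A B l := by
  refine mem_VspR_iff.2 ⟨F.mulVec w, ?_⟩
  rw [smul_one_sub_mulVec, ← h, Matrix.add_mulVec, ← Matrix.mulVec_mulVec]
  abel

lemma eig_re_im {M : Matrix (Fin n) (Fin n) ℝ} {l : ℝ} {z : Fin n → ℂ}
    (h : (mapC M).mulVec z = (l : ℂ) • z) :
    M.mulVec (fun j => (z j).re) = l • (fun j => (z j).re) ∧
    M.mulVec (fun j => (z j).im) = l • (fun j => (z j).im) := by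
  constructor <;> funext k <;>
  · have hk := congrFun h k
    simp only [mapC, Matrix.mulVec, dotProduct, Matrix.map_apply, Pi.smul_apply,
      smul_eq_mul] at hk
    first
    | (have := congrArg Complex.re hk
       simpa [Complex.re_sum, Complex.mul_re, Pi.smul_apply, smul_eq_mul,
         Matrix.mulVec, dotProduct] using this)
    | (have := congrArg Complex.im hk
       simpa [Complex.im_sum, Complex.mul_im, Pi.smul_apply, smul_eq_mul,
         Matrix.mulVec, dotProduct] using this)

end FRaux

open FRaux in
theorem feedback_rectifiable_real_iff_span
    {n p : ℕ} (A₁ A₂ : Matrix (Fin n) (Fin n) ℝ) (B₁ B₂ : Matrix (Fin n) (Fin p) ℝ)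
    (D : Set (ℝ × ℝ)) :
    FeedbackRectifiable A₁ A₂ B₁ B₂ ((fun x : ℝ × ℝ => ((x.1 : ℂ), (x.2 : ℂ))) '' D) ↔
    Submodule.span ℝ
      (⋃ d ∈ D, ((VspR A₁ B₁ d.1 ⊓ VspR A₂ B₂ d.2 : Submodule ℝ (Fin n → ℝ)) :
        Set (Fin n → ℝ))) = ⊤ := by
  set T : Set (Fin n → ℝ) :=
    ⋃ d ∈ D, ((VspR A₁ B₁ d.1 ⊓ VspR A₂ B₂ d.2 : Submodule ℝ (Fin n → ℝ)) :
      Set (Fin n → ℝ)) with hT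
  constructor
  · rintro ⟨F₁, F₂, lm, v, hD, hli, h1, h2⟩
    -- choose real pairs
    choose d hdD hdE using hD
    -- real and imaginary parts belong to T
    have hmemT : ∀ i, (fun j => (v i j).re) ∈ T ∧ (fun j => (v i j).im) ∈ T := by
      intro i
      have e1 : (mapC (A₁ + B₁ * F₁)).mulVec (v i) = ((d i).1 : ℂ) • v i := by
        rw [h1 i, ← hdE i]
      have e2 : (mapC (A₂ + B₂ * F₂)).mulVec (v i) = ((d i).2 : ℂ) • v i := by
        rw [h2 i, ← hdE i]
      obtain ⟨r1, m1⟩ := eig_re_im e1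
      obtain ⟨r2, m2⟩ := eig_re_im e2
      constructor <;>
      · refine Set.mem_biUnion (hdD i) ?_
        exact ⟨eig_mem ‹_›, eig_mem ‹_›⟩
    -- complex span of cpx '' T is top
    apply spanR_top
    have hsp : Submodule.span ℂ (Set.range v) = ⊤ := by
      rcases Nat.eq_zero_or_pos n with hn | hn
      · subst hn
        rw [eq_top_iff]
        rintro z -
        have : z = 0 := by funext j; exact absurd j.2 (by omega)
        simp [this]
      · have : Nonempty (Fin n) := ⟨⟨0, hn⟩⟩
        exact hli.span_eq_top_of_card_eq_finrank (by simp)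
    rw [eq_top_iff, ← hsp]
    refine Submodule.span_le.2 ?_
    rintro _ ⟨i, rfl⟩
    have hz : v i = cpx (fun j => (v i j).re) + Complex.I • cpx (fun j => (v i j).im) := by
      funext j
      simp only [cpx, Pi.add_apply, Pi.smul_apply, smul_eq_mul]
      rw [mul_comm]
      exact (Complex.re_add_im _).symm
    rw [hz]
    exact add_mem
      (Submodule.subset_span ⟨_, (hmemT i).1, rfl⟩)
      (Submodule.smul_mem _ _ (Submodule.subset_span ⟨_, (hmemT i).2, rfl⟩))
  · intro h
    -- extract a basis from the spanning set
    obtain ⟨s, hsT, hspan, hli⟩ := exists_linearIndependent ℝ T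
    rw [h] at hspan
    have hfin : s.Finite := hli.setFinite
    have : Fintype s := hfin.fintype
    let hb : Module.Basis s ℝ (Fin n → ℝ) := Module.Basis.mk hli (by rw [Subtype.range_coe, hspan])
    have hcard : Fintype.card s = n := by
      have := Module.finrank_eq_card_basis hb
      simpa [Module.finrank_fintype_fun_eq_card] using this.symm
    have e : Fin n ≃ s := (Fintype.equivFinOfCardEq hcard).symm
    set w : Fin n → (Fin n → ℝ) := fun i => ((e i : Fin n → ℝ)) with hw
    have hwT : ∀ i, w i ∈ T := fun i => hsT (e i).2
    let hwb : Module.Basis (Fin n) ℝ (Fin n → ℝ) := hb.reindex e.symm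
    have hwb_eq : ∀ i, hwb i = w i := by
      intro i
      simp [hwb, hb, hw, Module.Basis.reindex_apply, Module.Basis.mk_apply]
    -- choose eigenvalue pairs and controls
    have hmem : ∀ i, ∃ di ∈ D, w i ∈ VspR A₁ B₁ di.1 ⊓ VspR A₂ B₂ di.2 := by
      intro i
      have hwi := hwT i
      rw [hT] at hwi
      simp only [Set.mem_iUnion, SetLike.mem_coe, Submodule.mem_inf] at hwi
      obtain ⟨di, hdi, h1, h2⟩ := hwi
      exact ⟨di, hdi, h1, h2⟩
    choose d hdD hdV using hmem
    have hu1 : ∀ i, ∃ u, B₁.mulVec u =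
        ((d i).1 • (1 : Matrix (Fin n) (Fin n) ℝ) - A₁).mulVec (w i) :=
      fun i => mem_VspR_iff.1 (hdV i).1
    have hu2 : ∀ i, ∃ u, B₂.mulVec u =
        ((d i).2 • (1 : Matrix (Fin n) (Fin n) ℝ) - A₂).mulVec (w i) :=
      fun i => mem_VspR_iff.1 (hdV i).2
    choose u₁ hu₁ using hu1
    choose u₂ hu₂ using hu2
    set F₁ : Matrix (Fin p) (Fin n) ℝ := LinearMap.toMatrix' (hwb.constr ℝ u₁) with hF₁
    set F₂ : Matrix (Fin p) (Fin n) ℝ := LinearMap.toMatrix' (hwb.constr ℝ u₂) with hF₂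
    have hF₁w : ∀ i, F₁.mulVec (w i) = u₁ i := by
      intro i
      have : F₁.mulVec (w i) = (hwb.constr ℝ u₁) (w i) := by
        rw [hF₁, ← Matrix.toLin'_apply, Matrix.toLin'_toMatrix']
      rw [this, ← hwb_eq i, Module.Basis.constr_basis]
    have hF₂w : ∀ i, F₂.mulVec (w i) = u₂ i := by
      intro i
      have : F₂.mulVec (w i) = (hwb.constr ℝ u₂) (w i) := by
        rw [hF₂, ← Matrix.toLin'_apply, Matrix.toLin'_toMatrix']
      rw [this, ← hwb_eq i, Module.Basis.constr_basis]
    have heig1 : ∀ i, (A₁ + B₁ * F₁).mulVec (w i) = (d i).1 • w i := by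
      intro i
      rw [Matrix.add_mulVec, ← Matrix.mulVec_mulVec, hF₁w i, hu₁ i, smul_one_sub_mulVec]
      abel
    have heig2 : ∀ i, (A₂ + B₂ * F₂).mulVec (w i) = (d i).2 • w i := by
      intro i
      rw [Matrix.add_mulVec, ← Matrix.mulVec_mulVec, hF₂w i, hu₂ i, smul_one_sub_mulVec]
      abel
    -- linear independence over ℂ of complexified basis
    have hsp : Submodule.span ℂ (Set.range (fun i => cpx (w i))) = ⊤ := by
      have hspR : Submodule.span ℝ (Set.range w) = ⊤ := by
        have := hwb.span_eq
        rw [eq_top_iff, ← this]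
        refine Submodule.span_le.2 ?_
        rintro _ ⟨i, rfl⟩
        rw [hwb_eq i]
        exact Submodule.subset_span ⟨i, rfl⟩
      have := spanC_top hspR
      rwa [← Set.range_comp] at this
    have hliC : LinearIndependent ℂ (fun i => cpx (w i)) :=
      linearIndependent_of_top_le_span_of_card_eq_finrank (le_of_eq hsp.symm) (by simp)
    refine ⟨F₁, F₂, fun i => (((d i).1 : ℂ), ((d i).2 : ℂ)), fun i => cpx (w i),
      fun i => ⟨d i, hdD i, rfl⟩, hliC, ?_, ?_⟩
    · intro i
      rw [mapC_mulVec_cpx, heig1 i, cpx_smul]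
    · intro i
      rw [mapC_mulVec_cpx, heig2 i, cpx_smul]

end
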